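/- Suppose 1 < α < 2 is irrational, β = α/(α-1) with ⌊β⌋ = 4, and positive integers p, q satisfy p{β} + q(1 - {α}) = 1. Then qα² + (3p - 3q + 1)α + (2q - 4p - 1) = 0, and hence α = (√(4pq + (q - 3p - 1)²) + 3q - 3p - 1)/(2q). -/

import Mathlib

theorem stmt_11 (α : ℝ) (hiα : Irrational α) (h1 : 1 < α) (h2 : α < 2)
    (β : ℝ) (hβ : β = α / (α - 1)) (hfl : ⌊β⌋ = 4)
    (p q : ℕ) (hp : 0 < p) (hq : 0 < q)
    (heq : (p : ℝ) * Int.fract β + (q : ℝ) * (1 - Int.fract α) = 1) :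
    (q : ℝ) * α^2 + (3 * (p : ℝ) - 3 * q + 1) * α + (2 * (q : ℝ) - 4 * p - 1) = 0 ∧
      α = (Real.sqrt (4 * p * q + ((q : ℝ) - 3 * p - 1)^2) + 3 * (q : ℝ) - 3 * p - 1) / (2 * q) := by
  have hα1pos : (0:ℝ) < α - 1 := by linarith
  have hα1 : α - 1 ≠ 0 := ne_of_gt hα1pos
  have hfloorα : ⌊α⌋ = 1 := by
    apply Int.floor_eq_iff.mpr
    constructor <;> push_cast <;> linarith
  have hfa : Int.fract α = α - 1 := by
    rw [Int.fract, hfloorα]; norm_num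
  have hfb : Int.fract β = β - 4 := by
    rw [Int.fract, hfl]; norm_num
  -- β is irrational
  have hβirr : Irrational β := by
    have h1' : Irrational (α - 1) := by simpa using hiα.sub_intCast 1
    have h2' : Irrational ((α - 1)⁻¹) := h1'.inv
    have h3' : Irrational (1 + (α - 1)⁻¹) := by simpa using h2'.intCast_add 1
    have : β = 1 + (α - 1)⁻¹ := by
      rw [hβ]; field_simp; ring
    rwa [this]
  have hfbpos : 0 < Int.fract β := by
    rw [hfb]
    have : β ≠ 4 := by
      have := hβirr.ne_int 4
      simpa using this
    have h4 : (4:ℝ) ≤ β := by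
      have := Int.floor_le β
      rw [hfl] at this; push_cast at this; linarith
    rcases lt_or_eq_of_le h4 with h | h
    · linarith
    · exact absurd h.symm this
  have hpq : (0:ℝ) < p := by exact_mod_cast hp
  have hqq : (0:ℝ) < q := by exact_mod_cast hq
  have hlt : (q:ℝ) * (2 - α) < 1 := by
    have : (p:ℝ) * Int.fract β > 0 := mul_pos hpq hfbpos
    rw [hfa] at heq
    nlinarith
  -- key quadratic equation
  have heq' := heq
  rw [hfa, hfb, hβ] at heq'
  have key : (q : ℝ) * α^2 + (3 * (p : ℝ) - 3 * q + 1) * α + (2 * (q : ℝ) - 4 * p - 1) = 0 := by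
    field_simp at heq'
    nlinarith [heq']
  refine ⟨key, ?_⟩
  have hpos : (0:ℝ) < 2 * q * α + (3 * p - 3 * q + 1) := by nlinarith
  have hsq : (4:ℝ) * p * q + ((q : ℝ) - 3 * p - 1)^2 = (2 * q * α + (3 * p - 3 * q + 1))^2 := by
    nlinarith [key]
  rw [hsq, Real.sqrt_sq hpos.le]
  field_simp
  ring
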